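/- arXiv:2511.03966 — 2 statements merged into one kernel-verified Lean document; each statement's English description precedes it below -/
import Mathlib

section
/- Assume p ≥ 2 and σ > 0. The total mean squared error β ↦ ∑_{i=1}^{p} E[(I_adj(i, β) − μ_i)²] attains its unique global minimum over ℝ at the optimal smoothing factor β* = (p−1)σ² / (S + (p−1)σ²), and the minimal value equals p·σ² − (p−1)²σ⁴ / (S + (p−1)σ²), which is strictly less than p·σ². -/
open MeasureTheory ProbabilityTheory

lemma aux_integral_sq {Ω : Type*} [MeasurableSpace Ω] (P : Measure Ω) [IsProbabilityMeasure P]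
    {p : ℕ} (ε : Fin p → Ω → ℝ) (σ : ℝ)
    (hεint : ∀ k, Integrable (ε k) P)
    (hmulint : ∀ j k, Integrable (fun ω => ε j ω * ε k ω) P)
    (hmean : ∀ i, ∫ ω, ε i ω ∂P = 0)
    (hmulval : ∀ j k, ∫ ω, ε j ω * ε k ω ∂P = if j = k then σ ^ 2 else 0)
    (d : ℝ) (c : Fin p → ℝ) :
    ∫ ω, (d + ∑ k, c k * ε k ω) ^ 2 ∂P = d ^ 2 + (∑ k, (c k) ^ 2) * σ ^ 2 := by
  have hT : Integrable (fun ω => ∑ k, c k * ε k ω) P :=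
    integrable_finset_sum _ fun k _ => (hεint k).const_mul _
  have hTval : ∫ ω, (∑ k, c k * ε k ω) ∂P = 0 := by
    rw [integral_finset_sum _ fun k _ => (hεint k).const_mul _]
    simp [integral_const_mul, hmean]
  have hT2expand : ∀ ω : Ω, (∑ k, c k * ε k ω) ^ 2
      = ∑ j, ∑ k, (c j * c k) * (ε j ω * ε k ω) := by
    intro ω
    rw [sq, Finset.sum_mul_sum]
    exact Finset.sum_congr rfl fun j _ => Finset.sum_congr rfl fun k _ => by ring
  have hT2int : Integrable (fun ω => (∑ k, c k * ε k ω) ^ 2) P := by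
    simp_rw [hT2expand]
    exact integrable_finset_sum _ fun j _ =>
      integrable_finset_sum _ fun k _ => (hmulint j k).const_mul _
  have hT2val : ∫ ω, (∑ k, c k * ε k ω) ^ 2 ∂P = (∑ k, (c k) ^ 2) * σ ^ 2 := by
    simp_rw [hT2expand]
    rw [integral_finset_sum _ fun j _ =>
      integrable_finset_sum _ fun k _ => (hmulint j k).const_mul _]
    have h1 : ∀ j, ∫ ω, ∑ k, (c j * c k) * (ε j ω * ε k ω) ∂P = (c j) ^ 2 * σ ^ 2 := by
      intro j
      rw [integral_finset_sum _ fun k _ => (hmulint j k).const_mul _]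
      have h2 : ∀ k, ∫ ω, (c j * c k) * (ε j ω * ε k ω) ∂P
          = if j = k then (c j) ^ 2 * σ ^ 2 else 0 := by
        intro k
        rw [integral_const_mul, hmulval j k]
        by_cases h : j = k
        · subst h; rw [if_pos rfl, if_pos rfl]; ring
        · simp [h]
      rw [Finset.sum_congr rfl fun k _ => h2 k]
      simp
    rw [Finset.sum_congr rfl fun j _ => h1 j, ← Finset.sum_mul]
  have expand : ∀ ω : Ω, (d + ∑ k, c k * ε k ω) ^ 2
      = d ^ 2 + (2 * d) * (∑ k, c k * ε k ω) + (∑ k, c k * ε k ω) ^ 2 := fun ω => by ring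
  simp_rw [expand]
  have h1 : Integrable (fun ω => d ^ 2 + 2 * d * ∑ k, c k * ε k ω) P := by
    exact (integrable_const _).add (hT.const_mul (2 * d))
  rw [integral_add h1 hT2int, integral_add (integrable_const _) (hT.const_mul (2 * d)),
    integral_const, integral_const_mul, hTval, hT2val]
  simp

/-- Assume `p ≥ 2` and `σ > 0`. The total mean squared error
`β ↦ ∑_i E[(I_adj(i, β) − μ_i)²]` attains its unique global minimum over `ℝ` at the
optimal smoothing factor `β* = (p−1)σ² / (S + (p−1)σ²)`, and the minimal value equals
`p·σ² − (p−1)²σ⁴ / (S + (p−1)σ²)`, which is strictly less than `p·σ²`. -/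
theorem adjusted_total_mse_min
    {Ω : Type*} [MeasurableSpace Ω] (P : Measure Ω) [IsProbabilityMeasure P]
    (p : ℕ) (hp : 2 ≤ p)
    (μs : Fin p → ℝ) (μbar : ℝ) (hμbar : μbar = (1 / (p : ℝ)) * ∑ k, μs k)
    (ε : Fin p → Ω → ℝ) (σ : ℝ) (hσ : 0 < σ)
    (hindep : iIndepFun ε P)
    (hL2 : ∀ i, MemLp (ε i) 2 P)
    (hmean : ∀ i, ∫ ω, ε i ω ∂P = 0)
    (hvar : ∀ i, ∫ ω, (ε i ω) ^ 2 ∂P = σ ^ 2)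
    (Iparam : Fin p → Ω → ℝ) (hIparam : ∀ i ω, Iparam i ω = μs i + ε i ω)
    (Ilayer : Ω → ℝ) (hIlayer : ∀ ω, Ilayer ω = (1 / (p : ℝ)) * ∑ k, Iparam k ω)
    (Iadj : Fin p → ℝ → Ω → ℝ)
    (hIadj : ∀ i β ω, Iadj i β ω = (1 - β) * Iparam i ω + β * Ilayer ω)
    (S : ℝ) (hS : S = ∑ i, (μbar - μs i) ^ 2)
    (βstar : ℝ) (hβstar : βstar = ((p : ℝ) - 1) * σ ^ 2 / (S + ((p : ℝ) - 1) * σ ^ 2)) :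
    (∀ β : ℝ, β ≠ βstar →
        ∑ i, ∫ ω, (Iadj i βstar ω - μs i) ^ 2 ∂P
          < ∑ i, ∫ ω, (Iadj i β ω - μs i) ^ 2 ∂P) ∧
      (∑ i, ∫ ω, (Iadj i βstar ω - μs i) ^ 2 ∂P
        = (p : ℝ) * σ ^ 2 - ((p : ℝ) - 1) ^ 2 * σ ^ 4 / (S + ((p : ℝ) - 1) * σ ^ 2)) ∧
      (∑ i, ∫ ω, (Iadj i βstar ω - μs i) ^ 2 ∂P < (p : ℝ) * σ ^ 2) := by
  have hp2 : (2 : ℝ) ≤ (p : ℝ) := by exact_mod_cast hp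
  have hp0 : (0 : ℝ) < (p : ℝ) := by linarith
  have hpne : (p : ℝ) ≠ 0 := ne_of_gt hp0
  have hεint : ∀ k, Integrable (ε k) P := fun k => (hL2 k).integrable one_le_two
  have hmulint : ∀ j k, Integrable (fun ω => ε j ω * ε k ω) P := by
    intro j k
    rcases eq_or_ne j k with rfl | hjk
    · simpa [sq] using (hL2 j).integrable_sq
    · exact (hindep.indepFun hjk).integrable_mul (hεint j) (hεint k)
  have hmulval : ∀ j k, ∫ ω, ε j ω * ε k ω ∂P = if j = k then σ ^ 2 else 0 := by
    intro j k
    rcases eq_or_ne j k with rfl | hjk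
    · simp only [if_pos rfl, ← pow_two]
      exact hvar j
    · rw [if_neg hjk]
      have h := IndepFun.integral_fun_mul_eq_mul_integral (hindep.indepFun hjk) (hεint j).aestronglyMeasurable (hεint k).aestronglyMeasurable
      rw [hmean j, zero_mul] at h
      exact h
  -- representation of the error
  have rep : ∀ (i : Fin p) (β : ℝ) (ω : Ω), Iadj i β ω - μs i
      = β * (μbar - μs i) + ∑ k, ((β / (p : ℝ)) + if k = i then (1 - β) else 0) * ε k ω := by
    intro i β ω
    have h1 : ∑ k, Iparam k ω = (∑ k, μs k) + ∑ k, ε k ω := by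
      simp [hIparam, Finset.sum_add_distrib]
    have h2 : ∑ k, ((β / (p : ℝ)) + if k = i then (1 - β) else 0) * ε k ω
        = (β / (p : ℝ)) * ∑ k, ε k ω + (1 - β) * ε i ω := by
      simp_rw [add_mul, Finset.sum_add_distrib, ite_mul, zero_mul, Finset.sum_ite_eq',
        Finset.mem_univ, if_pos, Finset.mul_sum]
    rw [hIadj, hIlayer, h1, hIparam, h2, hμbar]
    field_simp
    ring
  -- the quadratic formula for the MSE
  have MSE : ∀ β : ℝ, ∑ i, ∫ ω, (Iadj i β ω - μs i) ^ 2 ∂P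
      = (S + ((p : ℝ) - 1) * σ ^ 2) * β ^ 2 - 2 * ((p : ℝ) - 1) * σ ^ 2 * β
        + (p : ℝ) * σ ^ 2 := by
    intro β
    have step : ∀ i : Fin p, ∫ ω, (Iadj i β ω - μs i) ^ 2 ∂P
        = (β * (μbar - μs i)) ^ 2
          + (∑ k, ((β / (p : ℝ)) + if k = i then (1 - β) else 0) ^ 2) * σ ^ 2 := by
      intro i
      rw [show (fun ω => (Iadj i β ω - μs i) ^ 2)
          = fun ω => (β * (μbar - μs i)
            + ∑ k, ((β / (p : ℝ)) + if k = i then (1 - β) else 0) * ε k ω) ^ 2 from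
        funext fun ω => by rw [rep i β ω]]
      exact aux_integral_sq P ε σ hεint hmulint hmean hmulval _ _
    have csum : ∀ i : Fin p, ∑ k, ((β / (p : ℝ)) + if k = i then (1 - β) else 0) ^ 2
        = (p : ℝ) * (β / (p : ℝ)) ^ 2
          + (((β / (p : ℝ)) + (1 - β)) ^ 2 - (β / (p : ℝ)) ^ 2) := by
      intro i
      have h3 : ∀ k : Fin p, ((β / (p : ℝ)) + if k = i then (1 - β) else 0) ^ 2
          = (β / (p : ℝ)) ^ 2
            + if k = i then (((β / (p : ℝ)) + (1 - β)) ^ 2 - (β / (p : ℝ)) ^ 2) else 0 := by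
        intro k
        by_cases h : k = i
        · rw [if_pos h, if_pos h]; ring
        · rw [if_neg h, if_neg h]; ring
      simp_rw [h3]
      rw [Finset.sum_add_distrib, Finset.sum_const, Finset.sum_ite_eq']
      simp
    have hSsum : ∑ i, (β * (μbar - μs i)) ^ 2 = β ^ 2 * S := by
      rw [hS, Finset.mul_sum]
      exact Finset.sum_congr rfl fun i _ => by ring
    rw [Finset.sum_congr rfl fun i _ => step i, Finset.sum_add_distrib, hSsum]
    simp_rw [csum]
    rw [Finset.sum_const, Finset.card_univ, Fintype.card_fin, nsmul_eq_mul]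
    field_simp
    ring
  set A : ℝ := S + ((p : ℝ) - 1) * σ ^ 2 with hA
  have hS0 : 0 ≤ S := by
    rw [hS]; exact Finset.sum_nonneg fun i _ => sq_nonneg _
  have hApos : 0 < A := by
    have : 0 < ((p : ℝ) - 1) * σ ^ 2 := by
      apply mul_pos (by linarith) (by positivity)
    linarith
  have hAne : A ≠ 0 := ne_of_gt hApos
  have hmin : ∑ i, ∫ ω, (Iadj i βstar ω - μs i) ^ 2 ∂P
      = (p : ℝ) * σ ^ 2 - ((p : ℝ) - 1) ^ 2 * σ ^ 4 / A := by
    rw [MSE βstar, hβstar]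
    field_simp
    ring
  refine ⟨?_, hmin, ?_⟩
  · intro β hβ
    rw [hmin, MSE β]
    have hdiff : (A * β ^ 2 - 2 * ((p : ℝ) - 1) * σ ^ 2 * β + (p : ℝ) * σ ^ 2)
        - ((p : ℝ) * σ ^ 2 - ((p : ℝ) - 1) ^ 2 * σ ^ 4 / A) = A * (β - βstar) ^ 2 := by
      rw [hβstar]
      field_simp
      ring
    have hpos : 0 < A * (β - βstar) ^ 2 := by
      apply mul_pos hApos
      have : β - βstar ≠ 0 := sub_ne_zero.mpr hβ
      positivity
    nlinarith [hdiff, hpos]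
  · rw [hmin]
    have : 0 < ((p : ℝ) - 1) ^ 2 * σ ^ 4 / A := by
      apply div_pos _ hApos
      apply mul_pos (by nlinarith) (by positivity)
    linarith
end

section
/- (Superiority of HIF's importance estimation, Corollary 1.) Assume p ≥ 2 and σ > 0. Then there exists a smoothing factor β with 0 < β < 1 such that the total mean squared error of the hierarchically smoothed importance estimator is strictly lower than that of the naive individual-parameter estimator: ∑_{i=1}^{p} E[(I_adj(i, β) − μ_i)²] < ∑_{i=1}^{p} E[(I_param(i) − μ_i)²]. -/
open MeasureTheory ProbabilityTheory

lemma mul_integrable_of_memL2 {Ω : Type*} [MeasurableSpace Ω] {P : Measure Ω}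
    {f g : Ω → ℝ} (hf : MemLp f 2 P) (hg : MemLp g 2 P) :
    Integrable (fun ω => f ω * g ω) P := by
  have h : MemLp (f • g) 1 P := hg.smul hf
  rw [memLp_one_iff_integrable] at h
  exact h

/-- Superiority of HIF's importance estimation, Corollary 1:
Assume `p ≥ 2` and `σ > 0`. Then there exists a smoothing factor `β` with `0 < β < 1`
such that the total mean squared error of the hierarchically smoothed importance
estimator is strictly lower than that of the naive individual-parameter estimator:
`∑_i E[(I_adj(i, β) − μ_i)²] < ∑_i E[(I_param(i) − μ_i)²]`. -/
theorem hif_superiority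
    {Ω : Type*} [MeasurableSpace Ω] (P : Measure Ω) [IsProbabilityMeasure P]
    (p : ℕ) (hp : 2 ≤ p)
    (μs : Fin p → ℝ) (μbar : ℝ) (hμbar : μbar = (1 / (p : ℝ)) * ∑ k, μs k)
    (ε : Fin p → Ω → ℝ) (σ : ℝ) (hσ : 0 < σ)
    (hindep : iIndepFun ε P)
    (hL2 : ∀ i, MemLp (ε i) 2 P)
    (hmean : ∀ i, ∫ ω, ε i ω ∂P = 0)
    (hvar : ∀ i, ∫ ω, (ε i ω) ^ 2 ∂P = σ ^ 2)
    (Iparam : Fin p → Ω → ℝ) (hIparam : ∀ i ω, Iparam i ω = μs i + ε i ω)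
    (Ilayer : Ω → ℝ) (hIlayer : ∀ ω, Ilayer ω = (1 / (p : ℝ)) * ∑ k, Iparam k ω)
    (Iadj : Fin p → ℝ → Ω → ℝ)
    (hIadj : ∀ i β ω, Iadj i β ω = (1 - β) * Iparam i ω + β * Ilayer ω) :
    ∃ β : ℝ, 0 < β ∧ β < 1 ∧
      ∑ i, ∫ ω, (Iadj i β ω - μs i) ^ 2 ∂P
        < ∑ i, ∫ ω, (Iparam i ω - μs i) ^ 2 ∂P := by
  have hp0 : (0:ℝ) < p := by positivity
  have hp2 : (2:ℝ) ≤ p := by exact_mod_cast hp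
  have hint : ∀ i, Integrable (ε i) P := fun i => (hL2 i).integrable one_le_two
  -- covariance structure
  have hcov : ∀ i j, ∫ ω, ε i ω * ε j ω ∂P = if i = j then σ ^ 2 else 0 := by
    intro i j
    by_cases h : i = j
    · subst h
      simp only [if_true]
      rw [← hvar i]
      congr 1; funext ω; ring
    · simp only [h, if_false]
      have := (hindep.indepFun h).integral_fun_mul_eq_mul_integral (hint i).aestronglyMeasurable (hint j).aestronglyMeasurable
      simpa [Pi.mul_apply, hmean i, hmean j] using this
  -- the deviation D i = Ilayer - Iparam i, explicit form
  have hD_eq : ∀ i, (fun ω => Ilayer ω - Iparam i ω)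
      = fun ω => (μbar - μs i) + ((1 / (p:ℝ)) * ∑ k, ε k ω - ε i ω) := by
    intro i
    funext ω
    rw [hIlayer, hIparam, hμbar]
    have : ∑ k, Iparam k ω = ∑ k, μs k + ∑ k, ε k ω := by
      rw [← Finset.sum_add_distrib]
      exact Finset.sum_congr rfl fun k _ => hIparam k ω
    rw [this]; ring
  -- D i is in L2
  have hsumL2 : MemLp (fun ω => ∑ k, ε k ω) 2 P :=
    memLp_finset_sum _ fun k _ => hL2 k
  have hDL2 : ∀ i, MemLp (fun ω => Ilayer ω - Iparam i ω) 2 P := by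
    intro i
    rw [hD_eq i]
    exact (memLp_const (μbar - μs i)).add ((hsumL2.const_mul (1 / (p:ℝ))).sub (hL2 i))
  -- cross term : ∫ ε i * D i = σ²/p - σ²
  have hcross : ∀ i, ∫ ω, ε i ω * (Ilayer ω - Iparam i ω) ∂P = σ ^ 2 / p - σ ^ 2 := by
    intro i
    have e1 : (fun ω => ε i ω * (Ilayer ω - Iparam i ω))
        = fun ω => ((μbar - μs i) * ε i ω
            + (1 / (p:ℝ)) * ∑ k, ε i ω * ε k ω) - (ε i ω) ^ 2 := by
      funext ω
      rw [congrFun (hD_eq i) ω, ← Finset.mul_sum]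
      ring
    have int1 : Integrable (fun ω => (μbar - μs i) * ε i ω) P := (hint i).const_mul _
    have int2 : ∀ k, Integrable (fun ω => ε i ω * ε k ω) P :=
      fun k => mul_integrable_of_memL2 (hL2 i) (hL2 k)
    have int2' : Integrable (fun ω => ∑ k, ε i ω * ε k ω) P :=
      integrable_finset_sum _ fun k _ => int2 k
    have int3 : Integrable (fun ω => (ε i ω) ^ 2) P := (hL2 i).integrable_sq
    have int2'' : Integrable (fun ω => (1 / (p:ℝ)) * ∑ k, ε i ω * ε k ω) P :=
      int2'.const_mul _
    have intA : Integrable (fun ω => (μbar - μs i) * ε i ω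
        + (1 / (p:ℝ)) * ∑ k, ε i ω * ε k ω) P := int1.add int2''
    rw [e1, integral_sub intA int3,
      integral_add int1 int2'', integral_const_mul, integral_const_mul,
      integral_finset_sum _ fun k _ => int2 k, hmean i, hvar i]
    have : ∑ k, ∫ ω, ε i ω * ε k ω ∂P = σ ^ 2 := by
      simp [hcov]
    rw [this]
    field_simp
    ring
  -- MSE of the naive estimator
  have hnaive : ∀ i, ∫ ω, (Iparam i ω - μs i) ^ 2 ∂P = σ ^ 2 := by
    intro i
    rw [← hvar i]
    congr 1; funext ω; rw [hIparam]; ring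
  -- MSE decomposition of the adjusted estimator
  have hMSE : ∀ (β : ℝ) i, ∫ ω, (Iadj i β ω - μs i) ^ 2 ∂P
      = σ ^ 2 + 2 * β * (σ ^ 2 / p - σ ^ 2)
        + β ^ 2 * ∫ ω, (Ilayer ω - Iparam i ω) ^ 2 ∂P := by
    intro β i
    have e1 : (fun ω => (Iadj i β ω - μs i) ^ 2)
        = fun ω => (ε i ω) ^ 2 + (2 * β) * (ε i ω * (Ilayer ω - Iparam i ω))
            + β ^ 2 * (Ilayer ω - Iparam i ω) ^ 2 := by
      funext ω
      rw [hIadj, hIparam]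
      ring
    have int3 : Integrable (fun ω => (ε i ω) ^ 2) P := (hL2 i).integrable_sq
    have int4 : Integrable (fun ω => ε i ω * (Ilayer ω - Iparam i ω)) P :=
      mul_integrable_of_memL2 (hL2 i) (hDL2 i)
    have int5 : Integrable (fun ω => (Ilayer ω - Iparam i ω) ^ 2) P :=
      (hDL2 i).integrable_sq
    have int4' : Integrable (fun ω => (2 * β) * (ε i ω * (Ilayer ω - Iparam i ω))) P :=
      int4.const_mul _
    have int5' : Integrable (fun ω => β ^ 2 * (Ilayer ω - Iparam i ω) ^ 2) P :=
      int5.const_mul _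
    have intB : Integrable (fun ω => (ε i ω) ^ 2
        + (2 * β) * (ε i ω * (Ilayer ω - Iparam i ω))) P := int3.add int4'
    rw [e1, integral_add intB int5', integral_add int3 int4', integral_const_mul,
      integral_const_mul, hvar i, hcross i]
  -- choose β
  set T : ℝ := ∑ i, ∫ ω, (Ilayer ω - Iparam i ω) ^ 2 ∂P with hT
  have hT0 : 0 ≤ T :=
    Finset.sum_nonneg fun i _ => integral_nonneg fun ω => sq_nonneg _
  set A : ℝ := ((p:ℝ) - 1) * σ ^ 2 with hA
  have hA0 : 0 < A := by
    apply mul_pos _ (by positivity)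
    linarith
  refine ⟨A / (2 * A + T), by positivity, ?_, ?_⟩
  · rw [div_lt_one (by linarith)]
    linarith
  · set β : ℝ := A / (2 * A + T) with hβ
    have hβpos : 0 < β := by positivity
    have hβeq : β * (2 * A + T) = A := by
      rw [hβ]; field_simp
    have hLHS : ∑ i, ∫ ω, (Iadj i β ω - μs i) ^ 2 ∂P
        = (p:ℝ) * σ ^ 2 - 2 * β * A + β ^ 2 * T := by
      rw [Finset.sum_congr rfl fun i _ => hMSE β i, Finset.sum_add_distrib, ← Finset.mul_sum]
      simp only [Finset.sum_const, Finset.card_univ, Fintype.card_fin, nsmul_eq_mul, ← hT]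
      rw [hA]
      field_simp
      ring
    have hRHS : ∑ i, ∫ ω, (Iparam i ω - μs i) ^ 2 ∂P = (p:ℝ) * σ ^ 2 := by
      rw [Finset.sum_congr rfl fun i _ => hnaive i]
      simp [Finset.card_univ]
    rw [hLHS, hRHS]
    have hbT : β * T = A - 2 * (β * A) := by linear_combination hβeq
    have h2 : β ^ 2 * T = β * A - 2 * (β ^ 2 * A) := by linear_combination β * hbT
    have h3 : 0 < β * A := mul_pos hβpos hA0
    have h4 : 0 ≤ β ^ 2 * A := mul_nonneg (sq_nonneg β) hA0.le
    linarith
end
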